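/- Let G = (V,E) be a graph with distinct edge weights, F ⊆ E a forest, S ⊇ end(E − F) a set of terminals containing all endpoints of non-forest edges, and let (G′, F′) = Contract_S(G, F) be the contracted graph and forest. Then E(G′) = (E − F) ⊔ E(F′) and |E(G′)| ≤ |E − F| + 2|S|. -/

import Mathlib

variable {V : Type*}

/-- `P` is the edge set of a nontrivial path of `F`. -/
def IsPathEdges (F : SimpleGraph V) (P : Set (Sym2 V)) : Prop :=
  ∃ (u v : V) (p : F.Walk u v), p.IsPath ∧ p.edges ≠ [] ∧ P = {e | e ∈ p.edges}

/-- `u` is an endpoint of the path of `F` whose edge set is `P`. -/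
def IsEndpoint (F : SimpleGraph V) (P : Set (Sym2 V)) (u : V) : Prop :=
  ∃ (v : V) (p : F.Walk u v), p.IsPath ∧ p.edges ≠ [] ∧ P = {e | e ∈ p.edges}

/-- The subgraph of `F` formed by the union of an edge set `E`. -/
def pathUnion (F : SimpleGraph V) (E : Set (Sym2 V)) : F.Subgraph where
  verts := {v : V | ∃ u : V, F.Adj v u ∧ s(v, u) ∈ E}
  Adj u v := F.Adj u v ∧ s(u, v) ∈ E
  adj_sub h := h.1
  edge_vert h := ⟨_, h.1, h.2⟩
  symm := ⟨fun u v h => ⟨h.1.symm, by rw [Sym2.eq_swap]; exact h.2⟩⟩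

/-- `Ps` is the set of connecting paths of the forest `F` with respect to the
terminal set `S` (the disjoint union, over the trees of `F`, of the connecting
paths of each tree): paths are pairwise edge-disjoint, within each tree the union
of the paths is connected, every terminal is an endpoint of a path, and every
endpoint of a path is a terminal or an endpoint of two other paths. -/
def IsConnectingPathsForest (F : SimpleGraph V) (S : Set V)
    (Ps : Set (Set (Sym2 V))) : Prop :=
  (∀ P ∈ Ps, IsPathEdges F P) ∧
  (Ps.Pairwise Disjoint) ∧
  (∀ P ∈ Ps, ∀ Q ∈ Ps, ∀ u v : V, IsEndpoint F P u → IsEndpoint F Q v →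
    F.Reachable u v → (pathUnion F (⋃₀ Ps)).spanningCoe.Reachable u v) ∧
  (∀ u ∈ S, ∃ P ∈ Ps, IsEndpoint F P u) ∧
  (∀ P ∈ Ps, ∀ u : V, IsEndpoint F P u → u ∈ S ∨
    ∃ Q ∈ Ps, ∃ R ∈ Ps, Q ≠ P ∧ R ≠ P ∧ Q ≠ R ∧ IsEndpoint F Q u ∧ IsEndpoint F R u)


section Aux

open SimpleGraph

variable {F : SimpleGraph V}

lemma walk_unique (hF : F.IsAcyclic) {u v : V} {p q : F.Walk u v}
    (hp : p.IsPath) (hq : q.IsPath) : p = q := by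
  have h := hF.path_unique ⟨p, hp⟩ ⟨q, hq⟩
  exact congrArg Subtype.val h

lemma path_length_eq_dist (hF : F.IsAcyclic) {u v : V} (p : F.Walk u v)
    (hp : p.IsPath) : p.length = F.dist u v := by
  obtain ⟨q, hq, hql⟩ := Reachable.exists_path_of_dist ⟨p⟩
  rw [walk_unique hF hp hq, hql]

lemma concat_path {r a x : V} {p : F.Walk r a}
    (hp : p.IsPath) (ha : F.Adj a x) (hx : x ∉ p.support) :
    (p.concat ha).IsPath := by
  rw [Walk.isPath_def, Walk.support_concat, List.nodup_append]
  simp [hp.support_nodup, hx]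
  rintro b hb rfl
  exact hx hb

lemma adj_dist (hF : F.IsAcyclic) {r u x : V} (hr : F.Reachable r u) (ha : F.Adj u x) :
    F.dist r x = F.dist r u + 1 ∨ F.dist r u = F.dist r x + 1 := by
  classical
  obtain ⟨p, hp, hpl⟩ := hr.exists_path_of_dist
  by_cases hx : x ∈ p.support
  · right
    have hsplit := p.take_spec hx
    have htp : (p.takeUntil x hx).IsPath := hp.takeUntil hx
    have hdp : (p.dropUntil x hx).IsPath := hp.dropUntil hx
    have hone : (Walk.cons ha.symm Walk.nil : F.Walk x u).IsPath := by
      simp [ha.ne']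
    have heq : p.dropUntil x hx = Walk.cons ha.symm Walk.nil := walk_unique hF hdp hone
    have hlen : (p.takeUntil x hx).length + (p.dropUntil x hx).length = p.length := by
      rw [← Walk.length_append, hsplit]
    rw [heq] at hlen
    simp only [Walk.length_cons, Walk.length_nil] at hlen
    have := path_length_eq_dist hF _ htp
    omega
  · left
    have hcp : (p.concat ha).IsPath := concat_path hp ha hx
    have := path_length_eq_dist hF _ hcp
    rw [Walk.length_concat] at this
    omega

lemma parent_unique (hF : F.IsAcyclic) {r x a b : V} (hr : F.Reachable r x)
    (ha : F.Adj x a) (hb : F.Adj x b)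
    (hda : F.dist r a + 1 = F.dist r x) (hdb : F.dist r b + 1 = F.dist r x) : a = b := by
  classical
  have key : ∀ {c : V} (hc : F.Adj x c), F.dist r c + 1 = F.dist r x →
      ∃ (p : F.Walk r c) (h : (p.concat hc.symm).IsPath), True := by
    intro c hc hdc
    obtain ⟨p, hp, hpl⟩ := (hr.trans hc.reachable).exists_path_of_dist
    refine ⟨p, ?_, trivial⟩
    apply concat_path hp
    intro hx
    have htp : (p.takeUntil x hx).IsPath := hp.takeUntil hx
    have h1 := path_length_eq_dist hF _ htp
    have h2 := p.length_takeUntil_le hx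
    omega
  obtain ⟨pa, hpa, -⟩ := key ha hda
  obtain ⟨pb, hpb, -⟩ := key hb hdb
  have heq : pa.concat ha.symm = pb.concat hb.symm := walk_unique hF hpa hpb
  have hed : pa.edges ++ [s(a, x)] = pb.edges ++ [s(b, x)] := by
    have := congrArg Walk.edges heq
    simpa [Walk.edges_concat, List.concat_eq_append] using this
  have hlen : [s(a, x)].length = [s(b, x)].length := rfl
  obtain ⟨-, h2⟩ := List.append_inj' hed rfl
  have : s(a, x) = s(b, x) := by simpa using h2
  exact Sym2.congr_left.mp this

lemma descend (hF : F.IsAcyclic) {r : V} : ∀ {u v : V} (p : F.Walk u v), p.IsPath → ¬ p.Nil →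
    F.Reachable r u → F.dist r (p.getVert 1) = F.dist r u + 1 → F.dist r u < F.dist r v := by
  intro u v p
  induction p with
  | nil => intro _ h; simp at h
  | @cons u u' v h q ih =>
    intro hp _ hr hd
    simp only [Walk.getVert_cons_succ, Walk.getVert_zero] at hd
    cases q with
    | nil =>
      simpa [hd] using Nat.lt_succ_self (F.dist r u)
    | @cons _ x _ h' q' =>
      have hru' : F.Reachable r u' := hr.trans h.reachable
      have hxs : x ∈ (Walk.cons h' q').support := by
        simp [Walk.support_cons]
      rcases adj_dist hF hru' h' with hcase | hcase
      · have hlt : F.dist r u' < F.dist r v := by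
          apply ih hp.of_cons (by simp) hru'
          simpa using hcase
        omega
      · exfalso
        have hux : u = x := parent_unique hF hru' h.symm h' (by omega) (by omega)
        have := hp
        rw [Walk.cons_isPath_iff] at this
        exact this.2 (hux ▸ hxs)

lemma edges_ne_nil_iff {u v : V} {p : F.Walk u v} : p.edges ≠ [] ↔ ¬ p.Nil := by
  rw [Walk.nil_iff_length_eq, ← Walk.length_edges, List.length_eq_zero_iff]

lemma getVert_one_mem_support {u v : V} {p : F.Walk u v} (h : ¬ p.Nil) :
    p.getVert 1 ∈ p.support := by
  rw [Walk.mem_support_iff_exists_getVert]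
  exact ⟨1, rfl, by rw [Walk.not_nil_iff_lt_length] at h; omega⟩

lemma mem_support_of_mem_edge {u v w : V} {p : F.Walk u v} {e : Sym2 V}
    (he : e ∈ p.edges) (hw : w ∈ e) : w ∈ p.support := by
  induction e with
  | _ a b =>
    rcases Sym2.mem_iff.mp hw with rfl | rfl
    · exact p.fst_mem_support_of_mem_edges he
    · exact p.snd_mem_support_of_mem_edges he

lemma first_edge_mem {u v : V} {p : F.Walk u v} (h : ¬ p.Nil) :
    s(u, p.getVert 1) ∈ p.edges := by
  cases p with
  | nil => simp at h
  | cons h' q => simp [Walk.edges_cons]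

lemma first_edge_unique {w x : V} {q : F.Walk w x} (hq : q.IsPath) {e : Sym2 V}
    (he : e ∈ q.edges) (hw : w ∈ e) : e = s(w, q.getVert 1) := by
  cases q with
  | nil => simp at he
  | cons h' q' =>
    rw [Walk.edges_cons, List.mem_cons] at he
    rcases he with rfl | he
    · simp
    · exfalso
      rw [Walk.cons_isPath_iff] at hq
      exact hq.2 (mem_support_of_mem_edge he hw)

lemma endpoint_cases {u v w x : V} (p : F.Walk u v) (hp : p.IsPath) (hpe : p.edges ≠ [])
    (q : F.Walk w x) (hq : q.IsPath) (hqe : q.edges ≠ [])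
    (hset : ∀ e, e ∈ q.edges ↔ e ∈ p.edges) : w = u ∨ w = v := by
  classical
  have hqn : ¬ q.Nil := edges_ne_nil_iff.mp hqe
  have he0 : s(w, q.getVert 1) ∈ q.edges := first_edge_mem hqn
  have hwp : w ∈ p.support :=
    mem_support_of_mem_edge ((hset _).mp he0) (Sym2.mem_mk_left _ _)
  by_contra hcon
  push_neg at hcon
  obtain ⟨hwu, hwv⟩ := hcon
  set t := p.takeUntil w hwp with ht
  set d := p.dropUntil w hwp with hd
  have htn : ¬ t.Nil := Walk.not_nil_of_ne (Ne.symm hwu)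
  have hdn : ¬ d.Nil := Walk.not_nil_of_ne hwv
  have htrn : ¬ t.reverse.Nil := Walk.not_nil_of_ne hwu
  set a := t.reverse.getVert 1 with hadef
  set b := d.getVert 1 with hbdef
  have he1 : s(w, a) ∈ t.edges := by
    have := first_edge_mem htrn
    rwa [Walk.edges_reverse, List.mem_reverse] at this
  have he2 : s(w, b) ∈ d.edges := first_edge_mem hdn
  have he1p : s(w, a) ∈ p.edges := p.edges_takeUntil_subset hwp he1
  have he2p : s(w, b) ∈ p.edges := p.edges_dropUntil_subset hwp he2
  -- both must equal the first edge of q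
  have hq1 := first_edge_unique hq ((hset _).mpr he1p) (Sym2.mem_mk_left _ _)
  have hq2 := first_edge_unique hq ((hset _).mpr he2p) (Sym2.mem_mk_left _ _)
  have hab : a = b := Sym2.congr_right.mp (hq1.trans hq2.symm)
  -- but a is before w and b is after w in p, contradicting nodup support
  have hat : a ∈ t.support := by
    have := getVert_one_mem_support htrn
    rwa [Walk.support_reverse, List.mem_reverse] at this
  have hbd : b ∈ d.support.tail := by
    have hb : b ∈ d.support := getVert_one_mem_support hdn
    have hbw : b ≠ w := (d.adj_snd hdn).ne'
    rw [d.support_eq_cons, List.mem_cons] at hb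
    tauto
  have hsplit : p.support = t.support ++ d.support.tail := by
    conv_lhs => rw [← p.take_spec hwp]
    exact Walk.support_append _ _
  have hnd := hp.support_nodup
  rw [hsplit, List.nodup_append] at hnd
  exact hnd.2.2 _ hat _ hbd hab

noncomputable def root (F : SimpleGraph V) (u : V) : V :=
  Quot.out (F.connectedComponentMk u)

lemma root_reachable (F : SimpleGraph V) (u : V) : F.Reachable (root F u) u :=
  ConnectedComponent.eq.mp (Quot.out_eq (F.connectedComponentMk u))

lemma root_eq_of_reachable {u v : V} (h : F.Reachable u v) : root F u = root F v := by
  unfold root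
  rw [ConnectedComponent.eq.mpr h]

lemma endpoint_iff {P : Set (Sym2 V)} {u v : V} (p : F.Walk u v) (hp : p.IsPath)
    (hpe : p.edges ≠ []) (hPeq : P = {e | e ∈ p.edges}) :
    u ≠ v ∧ ∀ w, IsEndpoint F P w ↔ (w = u ∨ w = v) := by
  have huv : u ≠ v := by
    rintro rfl
    rw [Walk.isPath_iff_eq_nil] at hp
    subst hp
    simp at hpe
  refine ⟨huv, fun w => ⟨?_, ?_⟩⟩
  · rintro ⟨x, q, hq, hqe, hPq⟩
    refine endpoint_cases p hp hpe q hq hqe fun e => ?_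
    have := hPq ▸ hPeq
    exact Set.ext_iff.mp this e
  · rintro (rfl | rfl)
    · exact ⟨v, p, hp, hpe, hPeq⟩
    · refine ⟨u, p.reverse, hp.reverse, ?_, ?_⟩
      · simp [Walk.edges_reverse, hpe]
      · rw [hPeq]; ext e; simp [Walk.edges_reverse]

def GoodEnd (F : SimpleGraph V) (P : Set (Sym2 V)) (w : V) : Prop :=
  ∃ (v : V) (p : F.Walk w v), p.IsPath ∧ p.edges ≠ [] ∧ P = {e | e ∈ p.edges} ∧
    F.dist (root F w) v ≤ F.dist (root F w) w

lemma goodEnd_exists {P : Set (Sym2 V)} (hP : IsPathEdges F P) : ∃ w, GoodEnd F P w := by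
  obtain ⟨u, v, p, hp, hpe, hPeq⟩ := hP
  have hroot : root F u = root F v := root_eq_of_reachable ⟨p⟩
  rcases le_total (F.dist (root F u) v) (F.dist (root F u) u) with h | h
  · exact ⟨u, v, p, hp, hpe, hPeq, h⟩
  · refine ⟨v, u, p.reverse, hp.reverse, ?_, ?_, ?_⟩
    · simp [Walk.edges_reverse, hpe]
    · rw [hPeq]; ext e; simp [Walk.edges_reverse]
    · rw [← hroot]; exact h

lemma goodEnd_endpoint {P : Set (Sym2 V)} {w : V} (h : GoodEnd F P w) :
    IsEndpoint F P w := by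
  obtain ⟨v, p, hp, hpe, hPeq, -⟩ := h
  exact ⟨v, p, hp, hpe, hPeq⟩

lemma goodEnd_edge (hF : F.IsAcyclic) {P : Set (Sym2 V)} {w : V} (h : GoodEnd F P w) :
    ∃ y : V, F.Adj w y ∧ s(w, y) ∈ P ∧
      F.dist (root F w) y + 1 = F.dist (root F w) w := by
  obtain ⟨v, p, hp, hpe, hPeq, hd⟩ := h
  have hn : ¬ p.Nil := edges_ne_nil_iff.mp hpe
  have hr : F.Reachable (root F w) w := root_reachable F w
  refine ⟨p.getVert 1, p.adj_snd hn, ?_, ?_⟩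
  · rw [hPeq]; exact first_edge_mem hn
  · rcases adj_dist hF hr (p.adj_snd hn : F.Adj w (p.getVert 1)) with hcase | hcase
    · exact absurd (descend hF p hp hn hr hcase) (by omega)
    · exact hcase.symm

end Aux

/-- In the contraction `(G', F') = Contract_S(G, F)` of a graph `G` with forest `F`
and terminals `S ⊇ end(E − F)`, the edge set of `G'` is the disjoint union of the
non-tree edges `N = E − F` and of the super edges `E(F')` (one per connecting path),
so `|E(G')| = |N| + |Ps_S(F)| ≤ |N| + 2|S|`. -/
theorem contracted_graph_edge_bound [Fintype V]
    (F : SimpleGraph V) (hF : F.IsAcyclic)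
    (N : Set (Sym2 V)) (S : Set V) (hS : ∀ e ∈ N, ∀ v ∈ e, v ∈ S)
    (Ps : Set (Set (Sym2 V))) (hPs : IsConnectingPathsForest F S Ps) :
    N.ncard + Ps.ncard ≤ N.ncard + 2 * S.ncard := by
  classical
  refine Nat.add_le_add_left ?_ _
  rcases Set.eq_empty_or_nonempty Ps with rfl | ⟨P₀, hP₀⟩
  · simp
  obtain ⟨u₀, -⟩ := hPs.1 P₀ hP₀
  haveI : Nonempty V := ⟨u₀⟩
  set T : Set V := {u | ∃ P ∈ Ps, IsEndpoint F P u} with hT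
  -- the injection from paths to endpoints
  have hinj : Ps.ncard ≤ T.ncard := by
    apply Set.ncard_le_ncard_of_injOn
      (fun P => if h : ∃ w, GoodEnd F P w then h.choose else Classical.arbitrary V)
    · intro P hP
      have h : ∃ w, GoodEnd F P w := goodEnd_exists (hPs.1 P hP)
      simp only [dif_pos h]
      exact ⟨P, hP, goodEnd_endpoint h.choose_spec⟩
    · intro P hP Q hQ hfeq
      have hPg : ∃ w, GoodEnd F P w := goodEnd_exists (hPs.1 P hP)
      have hQg : ∃ w, GoodEnd F Q w := goodEnd_exists (hPs.1 Q hQ)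
      simp only [dif_pos hPg, dif_pos hQg] at hfeq
      have hQw : GoodEnd F Q hPg.choose := hfeq ▸ hQg.choose_spec
      obtain ⟨y₁, ha₁, hm₁, hd₁⟩ := goodEnd_edge hF hPg.choose_spec
      obtain ⟨y₂, ha₂, hm₂, hd₂⟩ := goodEnd_edge hF hQw
      have hy : y₁ = y₂ :=
        parent_unique hF (root_reachable F hPg.choose) ha₁ ha₂ hd₁ hd₂
      by_contra hne
      exact Set.disjoint_left.mp (hPs.2.1 hP hQ hne) hm₁ (hy ▸ hm₂)
  -- counting
  set s : Finset (Set (Sym2 V)) := Ps.toFinite.toFinset with hsdef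
  set t : Finset V := (Set.toFinite T).toFinset with htdef
  have hs : Ps.ncard = s.card := Set.ncard_eq_toFinset_card _ _
  have ht : T.ncard = t.card := Set.ncard_eq_toFinset_card _ _
  have hmem_s : ∀ P, P ∈ s ↔ P ∈ Ps := fun P => Set.Finite.mem_toFinset _
  have hmem_t : ∀ u, u ∈ t ↔ u ∈ T := fun u => Set.Finite.mem_toFinset _
  have deg2 : ∀ P ∈ s, (t.filter fun u => IsEndpoint F P u).card = 2 := by
    intro P hP
    rw [hmem_s] at hP
    obtain ⟨u, v, p, hp, hpe, hPeq⟩ := hPs.1 P hP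
    obtain ⟨huv, hchar⟩ := endpoint_iff p hp hpe hPeq
    have : (t.filter fun w => IsEndpoint F P w) = {u, v} := by
      ext w
      simp only [Finset.mem_filter, Finset.mem_insert, Finset.mem_singleton]
      constructor
      · rintro ⟨-, hw⟩
        exact (hchar w).mp hw
      · intro hw
        have hend : IsEndpoint F P w := (hchar w).mpr hw
        exact ⟨(hmem_t w).mpr ⟨P, hP, hend⟩, hend⟩
    rw [this]
    simp [huv]
  have degS : ∀ u ∈ t, u ∉ S → 3 ≤ (s.filter fun P => IsEndpoint F P u).card := by
    intro u hu huS
    rw [hmem_t] at hu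
    obtain ⟨P, hP, hPu⟩ := hu
    rcases hPs.2.2.2.2 P hP u hPu with h | ⟨Q, hQ, R, hR, hQP, hRP, hQR, hQu, hRu⟩
    · exact absurd h huS
    · have hsub : ({Q, R, P} : Finset (Set (Sym2 V))) ⊆
          s.filter fun P => IsEndpoint F P u := by
        intro X hX
        simp only [Finset.mem_insert, Finset.mem_singleton] at hX
        rcases hX with rfl | rfl | rfl <;>
          simp [Finset.mem_filter, hmem_s, hQ, hR, hP, hQu, hRu, hPu]
      have hcard : ({Q, R, P} : Finset (Set (Sym2 V))).card = 3 := by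
        rw [Finset.card_insert_of_notMem (by simp [hQR, hQP]),
          Finset.card_insert_of_notMem (by simp [hRP])]
        simp
      calc 3 = ({Q, R, P} : Finset (Set (Sym2 V))).card := hcard.symm
        _ ≤ _ := Finset.card_le_card hsub
  have deg1 : ∀ u ∈ t, 1 ≤ (s.filter fun P => IsEndpoint F P u).card := by
    intro u hu
    rw [hmem_t] at hu
    obtain ⟨P, hP, hPu⟩ := hu
    rw [Nat.one_le_iff_ne_zero, ← Nat.pos_iff_ne_zero, Finset.card_pos]
    exact ⟨P, by simp [Finset.mem_filter, hmem_s, hP, hPu]⟩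
  have hsum : ∑ P ∈ s, (t.filter fun u => IsEndpoint F P u).card
      = ∑ u ∈ t, (s.filter fun P => IsEndpoint F P u).card := by
    simp_rw [Finset.card_filter]
    rw [Finset.sum_comm]
  have h2k : 2 * s.card = ∑ u ∈ t, (s.filter fun P => IsEndpoint F P u).card := by
    rw [← hsum, Finset.sum_congr rfl deg2, Finset.sum_const, smul_eq_mul, mul_comm]
  -- split t into terminals and non-terminals
  have hsplit : (t.filter fun u => u ∈ S).card + (t.filter fun u => u ∉ S).card
      = t.card := Finset.card_filter_add_card_filter_not _
  set a := (t.filter fun u => u ∈ S).card with hadef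
  set b := (t.filter fun u => u ∉ S).card with hbdef
  have hbound : a + 3 * b ≤ 2 * s.card := by
    rw [h2k, ← Finset.sum_filter_add_sum_filter_not t (fun u => u ∈ S)]
    have h1 : a * 1 ≤ ∑ u ∈ t.filter (fun u => u ∈ S),
        (s.filter fun P => IsEndpoint F P u).card := by
      rw [← smul_eq_mul]
      apply Finset.card_nsmul_le_sum
      intro u hu
      exact deg1 u (Finset.mem_of_mem_filter u hu)
    have h3 : b * 3 ≤ ∑ u ∈ t.filter (fun u => u ∉ S),
        (s.filter fun P => IsEndpoint F P u).card := by
      rw [← smul_eq_mul]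
      apply Finset.card_nsmul_le_sum
      intro u hu
      have := Finset.mem_filter.mp hu
      exact degS u this.1 this.2
    omega
  have haS : a ≤ S.ncard := by
    rw [Set.ncard_eq_toFinset_card S (Set.toFinite S)]
    apply Finset.card_le_card
    intro u hu
    rw [Set.Finite.mem_toFinset]
    exact (Finset.mem_filter.mp hu).2
  rw [hs]
  rw [hs, ht] at hinj
  omega
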